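/- Under the matching-market dynamic pricing scheme, the following invariant holds by induction on t: if M_t denotes the partial matching formed by the first t arriving unit-demand agents each purchasing an item in their demand set under the computed prices (or nothing), and M_{>t} denotes a suitably chosen maximum-weight matching of the remaining agents and items, then SW(M_t) + SW(M_{>t}) = OPT for all t ∈ {0,1,…,n}; in particular the final welfare SW(M_n) equals OPT. -/

import Mathlib

set_option linter.unusedSectionVars false
set_option maxHeartbeats 1000000

section Stmt19

variable {I : Type*} [Fintype I] [DecidableEq I] {n : ℕ}

/-- A partial matching of agents to items: an `Option`-valued assignment, injective on the
agents that receive an item. -/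
def PartialM (f : Fin n → Option I) : Prop :=
  ∀ k k' : Fin n, ∀ b : I, f k = some b → f k' = some b → k = k'

/-- The social welfare of a partial matching. -/
def msw (v : Fin n → I → ℝ) (f : Fin n → Option I) : ℝ :=
  ∑ k, (f k).elim 0 (v k)

/-- The items sold before step `t`, given the purchases `z` (indexed by arrival position). -/
def soldBefore (z : Fin n → Option I) (t : ℕ) : Finset I :=
  (Finset.univ.filter (fun s : Fin n => (s : ℕ) < t)).biUnion (fun s => (z s).toFinset)

/-- `RemainMatching z σ t μ`: `μ` is a matching of the agents still to arrive at time `t`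
(arrival order `σ`, purchases `z`) to items not yet sold before time `t`. -/
def RemainMatching (z : Fin n → Option I) (σ : Equiv.Perm (Fin n)) (t : ℕ)
    (μ : Fin n → Option I) : Prop :=
  PartialM μ ∧
  (∀ s : Fin n, (s : ℕ) < t → μ (σ s) = none) ∧
  (∀ a : Fin n, ∀ b : I, μ a = some b → b ∉ soldBefore z t)

/-- `μ` matches *all* the items remaining at time `t`. -/
def MatchesAllRemaining (z : Fin n → Option I) (t : ℕ) (μ : Fin n → Option I) : Prop :=
  ∀ b : I, b ∉ soldBefore z t → ∃ a, μ a = some b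

/-- The pair of items `(b, b')` lies on a directed cycle of total weight `0` of the relation
graph associated with the matching `μ` (agents `ca j` matched to items `cb j`). -/
def OnZeroCycleM (v : Fin n → I → ℝ) (μ : Fin n → Option I) (b b' : I) : Prop :=
  ∃ (ℓ : ℕ) (ca : Fin (ℓ + 1) → Fin n) (cb : Fin (ℓ + 1) → I),
    (∀ j, μ (ca j) = some (cb j)) ∧
    (∑ j : Fin (ℓ + 1), (v (ca j) (cb j) - v (ca j) (cb (j + 1)))) = 0 ∧
    ∃ j : Fin (ℓ + 1), cb j = b ∧ cb (j + 1) = b'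

lemma mem_soldBefore {z : Fin n → Option I} {t : ℕ} {b : I} :
    b ∈ soldBefore z t ↔ ∃ s : Fin n, (s : ℕ) < t ∧ z s = some b := by
  simp [soldBefore, Option.mem_toFinset, eq_comm]

lemma soldBefore_mono {z : Fin n → Option I} {t t' : ℕ} (h : t ≤ t') :
    soldBefore z t ⊆ soldBefore z t' := by
  intro b hb
  rw [mem_soldBefore] at hb ⊢
  obtain ⟨s, hs, hzs⟩ := hb
  exact ⟨s, lt_of_lt_of_le hs h, hzs⟩

lemma RemainMatching.mono {z : Fin n → Option I} {σ : Equiv.Perm (Fin n)} {t t' : ℕ}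
    (h : t ≤ t') {ν : Fin n → Option I} (hν : RemainMatching z σ t' ν) :
    RemainMatching z σ t ν := by
  refine ⟨hν.1, fun s hs => hν.2.1 s (lt_of_lt_of_le hs h), fun a b hab hb => ?_⟩
  exact hν.2.2 a b hab (soldBefore_mono h hb)

lemma card_filter_coe_lt (m : ℕ) (hm : m ≤ n) :
    (Finset.univ.filter (fun s : Fin n => (s : ℕ) < m)).card = m := by
  have : (Finset.univ.filter (fun s : Fin n => (s : ℕ) < m)) =
      Finset.map (Fin.castLEEmb hm) Finset.univ := by
    ext x
    simp only [Finset.mem_filter, Finset.mem_univ, true_and, Finset.mem_map]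
    constructor
    · intro hx
      exact ⟨⟨(x : ℕ), hx⟩, by ext; simp [Fin.castLEEmb, Fin.castLE]⟩
    · rintro ⟨y, rfl⟩
      simpa [Fin.castLEEmb, Fin.castLE] using y.2
  rw [this, Finset.card_map, Finset.card_univ, Fintype.card_fin]

lemma card_filter_coe_gt (m : ℕ) (hm : m < n) :
    (Finset.univ.filter (fun s : Fin n => m < (s : ℕ))).card = n - (m + 1) := by
  have h1 := Finset.card_filter_add_card_filter_not
    (s := (Finset.univ : Finset (Fin n))) (p := fun s : Fin n => (s : ℕ) < m + 1)
  have h2 : (Finset.univ.filter (fun s : Fin n => ¬ ((s : ℕ) < m + 1))) =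
      (Finset.univ.filter (fun s : Fin n => m < (s : ℕ))) := by
    apply Finset.filter_congr; intro x _; simp
  rw [h2, card_filter_coe_lt (m + 1) hm, Finset.card_univ, Fintype.card_fin] at h1
  omega

lemma soldBefore_card_le (z : Fin n → Option I) (t : ℕ) (ht : t ≤ n) :
    (soldBefore z t).card ≤ t := by
  calc (soldBefore z t).card
      ≤ ∑ s ∈ Finset.univ.filter (fun s : Fin n => (s : ℕ) < t), (z s).toFinset.card :=
        Finset.card_biUnion_le
    _ ≤ ∑ _s ∈ Finset.univ.filter (fun s : Fin n => (s : ℕ) < t), 1 := by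
        apply Finset.sum_le_sum; intro s _
        cases z s <;> simp
    _ = t := by rw [Finset.sum_const, smul_eq_mul, mul_one, card_filter_coe_lt t ht]

lemma filter_lt_succ (t : ℕ) (ht : t < n) :
    (Finset.univ.filter (fun s : Fin n => (s : ℕ) < t + 1)) =
      insert ⟨t, ht⟩ (Finset.univ.filter (fun s : Fin n => (s : ℕ) < t)) := by
  ext s
  simp only [Finset.mem_filter, Finset.mem_univ, true_and, Finset.mem_insert, Fin.ext_iff]
  omega

lemma msw_update (v : Fin n → I → ℝ) (f : Fin n → Option I) (a : Fin n) (w : Option I) :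
    msw v (Function.update f a w) = msw v f - (f a).elim 0 (v a) + w.elim 0 (v a) := by
  unfold msw
  have h : ∀ k, ((Function.update f a w) k).elim 0 (v k) =
      Function.update (fun k => (f k).elim 0 (v k)) a (w.elim 0 (v a)) k := by
    intro k
    by_cases hk : k = a
    · subst hk; simp
    · simp [Function.update_of_ne hk]
  rw [Finset.sum_congr rfl (fun k _ => h k), Finset.sum_update_of_mem (Finset.mem_univ a)]
  rw [← Finset.add_sum_erase _ _ (Finset.mem_univ a), Finset.sdiff_singleton_eq_erase]
  ring


/-! ### Walks (closed cycles) in a matching and rotations -/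

/-- weight of a closed walk -/
def wtw (v : Fin n → I → ℝ) (a : ℕ → Fin n) (c : ℕ → I) (L : ℕ) : ℝ :=
  ∑ i ∈ Finset.range L, (v (a i) (c i) - v (a i) (c (i + 1)))

/-- the rotated matching along a walk -/
noncomputable def rotM (M : Fin n → Option I) (a : ℕ → Fin n) (c : ℕ → I) (L : ℕ) :
    Fin n → Option I :=
  fun x => if h : ∃ i, i < L ∧ a i = x then some (c (h.choose + 1)) else M x

section Walk

variable {v : Fin n → I → ℝ} {z : Fin n → Option I} {σ : Equiv.Perm (Fin n)} {t : ℕ}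
variable {M : Fin n → Option I} {a : ℕ → Fin n} {c : ℕ → I} {L : ℕ}

lemma rotM_apply_not {x : Fin n} (hx : ∀ i, i < L → a i ≠ x) :
    rotM M a c L x = M x := by
  unfold rotM
  rw [dif_neg]
  rintro ⟨i, hi, rfl⟩
  exact hx i hi rfl

lemma ainj (hPM : PartialM M) (hM : ∀ i, i < L → M (a i) = some (c i))
    (hcinj : ∀ i, i < L → ∀ j, j < L → c i = c j → i = j) :
    ∀ i, i < L → ∀ j, j < L → a i = a j → i = j := by
  intro i hi j hj hij
  apply hcinj i hi j hj
  have h1 := hM i hi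
  have h2 := hM j hj
  rw [hij, h2] at h1
  exact (Option.some.inj h1).symm

lemma rotM_apply_mem (hPM : PartialM M) (hM : ∀ i, i < L → M (a i) = some (c i))
    (hcinj : ∀ i, i < L → ∀ j, j < L → c i = c j → i = j)
    {i : ℕ} (hi : i < L) :
    rotM M a c L (a i) = some (c (i + 1)) := by
  have h : ∃ j, j < L ∧ a j = a i := ⟨i, hi, rfl⟩
  unfold rotM
  rw [dif_pos h]
  obtain ⟨hj1, hj2⟩ := h.choose_spec
  have := ainj hPM hM hcinj _ hj1 _ hi hj2
  rw [this]

/-- normalized successor -/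
lemma c_succ_mod (hc : c L = c 0) {q : ℕ} (hq : q < L) : c ((q + 1) % L) = c (q + 1) := by
  rcases Nat.lt_or_ge (q + 1) L with h | h
  · rw [Nat.mod_eq_of_lt h]
  · have hqL : q + 1 = L := by omega
    rw [hqL, Nat.mod_self, ← hc]

lemma rotM_eq_some (hc : c L = c 0) {x : Fin n} {b : I} (hb : rotM M a c L x = some b) :
    (∃ i, i < L ∧ a i = x ∧ b = c ((i + 1) % L)) ∨
      ((∀ i, i < L → a i ≠ x) ∧ M x = some b) := by
  by_cases h : ∃ i, i < L ∧ a i = x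
  · left
    unfold rotM at hb
    rw [dif_pos h] at hb
    obtain ⟨hj1, hj2⟩ := h.choose_spec
    refine ⟨h.choose, hj1, hj2, ?_⟩
    rw [c_succ_mod hc hj1]
    exact (Option.some.inj hb).symm
  · right
    push_neg at h
    refine ⟨fun i hi => h i hi, ?_⟩
    rwa [rotM_apply_not (fun i hi => h i hi)] at hb

lemma mod_succ_inj (hL : 0 < L) {i j : ℕ} (hi : i < L) (hj : j < L)
    (h : (i + 1) % L = (j + 1) % L) : i = j := by
  rcases Nat.lt_or_ge (i + 1) L with h1 | h1 <;> rcases Nat.lt_or_ge (j + 1) L with h2 | h2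
  · rw [Nat.mod_eq_of_lt h1, Nat.mod_eq_of_lt h2] at h; omega
  · have : j + 1 = L := by omega
    rw [Nat.mod_eq_of_lt h1, this, Nat.mod_self] at h; omega
  · have : i + 1 = L := by omega
    rw [Nat.mod_eq_of_lt h2, this, Nat.mod_self] at h; omega
  · omega

/-- The rotated matching is a valid remaining matching, sends each cycle agent to the
next item, and loses exactly the walk weight. -/
lemma rot_spec (hrm : RemainMatching z σ t M) (hL : 0 < L)
    (hM : ∀ i, i < L → M (a i) = some (c i)) (hc : c L = c 0)
    (hcinj : ∀ i, i < L → ∀ j, j < L → c i = c j → i = j) :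
    RemainMatching z σ t (rotM M a c L) ∧
    (∀ i, i < L → rotM M a c L (a i) = some (c (i + 1))) ∧
    msw v (rotM M a c L) = msw v M - wtw v a c L := by
  obtain ⟨hPM, hnone, hitems⟩ := hrm
  have hainj := ainj hPM hM hcinj
  have hmem : ∀ i, i < L → rotM M a c L (a i) = some (c (i + 1)) :=
    fun i hi => rotM_apply_mem hPM hM hcinj hi
  have hPM' : PartialM (rotM M a c L) := by
    intro k k' b hk hk'
    rcases rotM_eq_some hc hk with ⟨i, hi, hik, hbi⟩ | ⟨hnk, hMk⟩ <;>
      rcases rotM_eq_some hc hk' with ⟨j, hj, hjk, hbj⟩ | ⟨hnk', hMk'⟩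
    · have : (i + 1) % L = (j + 1) % L := by
        apply hcinj _ (Nat.mod_lt _ hL) _ (Nat.mod_lt _ hL)
        rw [← hbi, ← hbj]
      have := mod_succ_inj hL hi hj this
      rw [← hik, ← hjk, this]
    · -- k in cycle, k' not : contradiction
      exfalso
      have h1 : M (a ((i + 1) % L)) = some b := by
        rw [hM _ (Nat.mod_lt _ hL), ← hbi]
      have := hPM _ _ _ h1 hMk'
      exact hnk' _ (Nat.mod_lt _ hL) this
    · exfalso
      have h1 : M (a ((j + 1) % L)) = some b := by
        rw [hM _ (Nat.mod_lt _ hL), ← hbj]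
      have := hPM _ _ _ h1 hMk
      exact hnk _ (Nat.mod_lt _ hL) this
    · exact hPM _ _ _ hMk hMk'
  refine ⟨⟨hPM', ?_, ?_⟩, hmem, ?_⟩
  · intro s hs
    have hns : ∀ i, i < L → a i ≠ σ s := by
      intro i hi heq
      have := hM i hi
      rw [heq, hnone s hs] at this
      simp at this
    rw [rotM_apply_not hns, hnone s hs]
  · intro x b hb
    rcases rotM_eq_some hc hb with ⟨i, hi, hik, hbi⟩ | ⟨hnk, hMk⟩
    · subst hbi
      exact hitems _ _ (hM _ (Nat.mod_lt _ hL))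
    · exact hitems _ _ hMk
  · -- welfare identity
    have hdiff : msw v (rotM M a c L) - msw v M =
        ∑ x : Fin n, (((rotM M a c L) x).elim 0 (v x) - (M x).elim 0 (v x)) := by
      unfold msw
      rw [Finset.sum_sub_distrib]
    have hS : ∑ x : Fin n, (((rotM M a c L) x).elim 0 (v x) - (M x).elim 0 (v x)) =
        ∑ x ∈ (Finset.range L).image a,
          (((rotM M a c L) x).elim 0 (v x) - (M x).elim 0 (v x)) := by
      symm
      apply Finset.sum_subset (Finset.subset_univ _)
      intro x _ hx
      have hnx : ∀ i, i < L → a i ≠ x := by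
        intro i hi heq
        exact hx (Finset.mem_image.mpr ⟨i, Finset.mem_range.mpr hi, heq⟩)
      rw [rotM_apply_not hnx, sub_self]
    have hI : ∑ x ∈ (Finset.range L).image a,
          (((rotM M a c L) x).elim 0 (v x) - (M x).elim 0 (v x)) =
        ∑ i ∈ Finset.range L, (v (a i) (c (i + 1)) - v (a i) (c i)) := by
      rw [Finset.sum_image]
      · apply Finset.sum_congr rfl
        intro i hi
        rw [Finset.mem_range] at hi
        rw [hmem i hi, hM i hi]
        simp
      · intro i hi j hj hij
        rw [Finset.mem_coe, Finset.mem_range] at hi hj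
        exact hainj i hi j hj hij
    have : msw v (rotM M a c L) - msw v M = - wtw v a c L := by
      rw [hdiff, hS, hI]
      unfold wtw
      rw [← Finset.sum_neg_distrib]
      apply Finset.sum_congr rfl
      intro i _
      ring
    linarith

lemma wtw_split {i1 i2 : ℕ} (v : Fin n → I → ℝ) (a : ℕ → Fin n) (c : ℕ → I)
    (h1 : i1 < i2) (h2 : i2 < L) (hcc : c i1 = c i2) (hc : c L = c 0) :
    wtw v a c L = wtw v (fun i => a (i1 + i)) (fun i => c (i1 + i)) (i2 - i1)
      + wtw v (fun i => a ((i2 + i) % L)) (fun i => c ((i2 + i) % L)) (L - (i2 - i1)) := by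
  have hL : 0 < L := by omega
  set w : ℕ → ℝ := fun j => v (a j) (c j) - v (a j) (c (j + 1)) with hw
  have hA : wtw v (fun i => a (i1 + i)) (fun i => c (i1 + i)) (i2 - i1)
      = ∑ i ∈ Finset.range (i2 - i1), w (i1 + i) := by
    unfold wtw
    apply Finset.sum_congr rfl
    intro i _
    rw [hw]
    simp only
    rw [show i1 + (i + 1) = (i1 + i) + 1 by omega]
  have hB : wtw v (fun i => a ((i2 + i) % L)) (fun i => c ((i2 + i) % L)) (L - (i2 - i1))
      = ∑ i ∈ Finset.range (L - (i2 - i1)), w ((i2 + i) % L) := by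
    unfold wtw
    apply Finset.sum_congr rfl
    intro i _
    rw [hw]
    simp only
    have hone : 1 % L = 1 := Nat.mod_eq_of_lt (by omega)
    have : c ((i2 + (i + 1)) % L) = c ((i2 + i) % L + 1) := by
      rw [show i2 + (i + 1) = (i2 + i) + 1 by omega]
      rw [Nat.add_mod (i2 + i) 1 L, hone]
      exact c_succ_mod hc (Nat.mod_lt _ hL)
    rw [this]
  rw [hA, hB]
  -- rewrite the B-sum as two chunks
  have hsplitlen : L - (i2 - i1) = (L - i2) + i1 := by omega
  have hBsum : ∑ i ∈ Finset.range (L - (i2 - i1)), w ((i2 + i) % L)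
      = (∑ i ∈ Finset.range (L - i2), w (i2 + i)) + ∑ i ∈ Finset.range i1, w i := by
    rw [hsplitlen]
    rw [Finset.range_eq_Ico, ← Finset.sum_Ico_consecutive _ (Nat.zero_le (L - i2)) (by omega :
      L - i2 ≤ L - i2 + i1)]
    congr 1
    · rw [← Finset.range_eq_Ico]
      apply Finset.sum_congr rfl
      intro i hi
      rw [Finset.mem_range] at hi
      rw [Nat.mod_eq_of_lt (by omega)]
    · rw [Finset.sum_Ico_eq_sum_range]
      have : L - i2 + i1 - (L - i2) = i1 := by omega
      rw [this]
      apply Finset.sum_congr rfl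
      intro i hi
      rw [Finset.mem_range] at hi
      have : i2 + (L - i2 + i) = L + i := by omega
      rw [this, Nat.add_mod_left, Nat.mod_eq_of_lt (by omega)]
  rw [hBsum]
  have hAsum : ∑ i ∈ Finset.range (i2 - i1), w (i1 + i) = ∑ j ∈ Finset.Ico i1 i2, w j := by
    rw [Finset.sum_Ico_eq_sum_range]
  have hCsum : ∑ i ∈ Finset.range (L - i2), w (i2 + i) = ∑ j ∈ Finset.Ico i2 L, w j := by
    rw [Finset.sum_Ico_eq_sum_range]
  rw [hAsum, hCsum]
  have : wtw v a c L = ∑ j ∈ Finset.range L, w j := rfl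
  rw [this, Finset.range_eq_Ico,
    ← Finset.sum_Ico_consecutive w (Nat.zero_le i1) (by omega : i1 ≤ L),
    ← Finset.sum_Ico_consecutive w (le_of_lt h1) (le_of_lt h2), ← Finset.range_eq_Ico]
  ring

lemma walk_nonneg (hrm : RemainMatching z σ t M)
    (hmax : ∀ ν, RemainMatching z σ t ν → msw v ν ≤ msw v M) :
    ∀ L, 0 < L → ∀ a : ℕ → Fin n, ∀ c : ℕ → I,
      (∀ i, i < L → M (a i) = some (c i)) → c L = c 0 → 0 ≤ wtw v a c L := by
  intro L
  induction L using Nat.strong_induction_on with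
  | _ L IH =>
  intro hL a c hM hc
  by_cases hinj : ∀ i, i < L → ∀ j, j < L → c i = c j → i = j
  · obtain ⟨hrm', -, hmsw⟩ := rot_spec hrm hL hM hc hinj
    have := hmax _ hrm'
    linarith
  · push_neg at hinj
    obtain ⟨i, hi, j, hj, hcij, hij⟩ := hinj
    have hcc : c (min i j) = c (max i j) := by
      rcases le_total i j with h | h
      · rw [min_eq_left h, max_eq_right h]; exact hcij
      · rw [min_eq_right h, max_eq_left h]; exact hcij.symm
    set i1 := min i j with hi1
    set i2 := max i j with hi2
    have h1 : i1 < i2 := by omega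
    have h2 : i2 < L := by omega
    have hA : 0 ≤ wtw v (fun k => a (i1 + k)) (fun k => c (i1 + k)) (i2 - i1) := by
      apply IH (i2 - i1) (by omega) (by omega)
      · intro k hk
        exact hM (i1 + k) (by omega)
      · show c (i1 + (i2 - i1)) = c (i1 + 0)
        rw [show i1 + (i2 - i1) = i2 by omega, show i1 + 0 = i1 by omega]
        exact hcc.symm
    have hB : 0 ≤ wtw v (fun k => a ((i2 + k) % L)) (fun k => c ((i2 + k) % L))
        (L - (i2 - i1)) := by
      apply IH (L - (i2 - i1)) (by omega) (by omega)
      · intro k hk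
        exact hM _ (Nat.mod_lt _ hL)
      · show c ((i2 + (L - (i2 - i1))) % L) = c ((i2 + 0) % L)
        rw [show i2 + (L - (i2 - i1)) = L + i1 by omega, Nat.add_mod_left,
          Nat.mod_eq_of_lt (by omega : i1 < L), show i2 + 0 = i2 by omega,
          Nat.mod_eq_of_lt h2]
        exact hcc
    have := wtw_split v a c h1 h2 hcc hc
    linarith

lemma walk_rotate (hrm : RemainMatching z σ t M)
    (hmax : ∀ ν, RemainMatching z σ t ν → msw v ν ≤ msw v M) :
    ∀ L, 0 < L → ∀ a : ℕ → Fin n, ∀ c : ℕ → I, ∀ k, k < L →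
      (∀ i, i < L → M (a i) = some (c i)) → c L = c 0 →
      ∃ M', RemainMatching z σ t M' ∧ M' (a k) = some (c (k + 1)) ∧
        msw v M - wtw v a c L ≤ msw v M' := by
  intro L
  induction L using Nat.strong_induction_on with
  | _ L IH =>
  intro hL a c k hk hM hc
  by_cases hinj : ∀ i, i < L → ∀ j, j < L → c i = c j → i = j
  · obtain ⟨hrm', hmem, hmsw⟩ := rot_spec hrm hL hM hc hinj
    exact ⟨rotM M a c L, hrm', hmem k hk, by linarith⟩
  · push_neg at hinj
    obtain ⟨i, hi, j, hj, hcij, hij⟩ := hinj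
    have hcc : c (min i j) = c (max i j) := by
      rcases le_total i j with h | h
      · rw [min_eq_left h, max_eq_right h]; exact hcij
      · rw [min_eq_right h, max_eq_left h]; exact hcij.symm
    set i1 := min i j with hi1
    set i2 := max i j with hi2
    have h1 : i1 < i2 := by omega
    have h2 : i2 < L := by omega
    have hsplit := wtw_split v a c h1 h2 hcc hc
    -- the two subwalks
    have hMA : ∀ p, p < i2 - i1 → M (a (i1 + p)) = some (c (i1 + p)) :=
      fun p hp => hM (i1 + p) (by omega)
    have hcA : c (i1 + (i2 - i1)) = c (i1 + 0) := by
      rw [show i1 + (i2 - i1) = i2 by omega, show i1 + 0 = i1 by omega]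
      exact hcc.symm
    have hMB : ∀ p, p < L - (i2 - i1) → M (a ((i2 + p) % L)) = some (c ((i2 + p) % L)) :=
      fun p hp => hM _ (Nat.mod_lt _ hL)
    have hcB : c ((i2 + (L - (i2 - i1))) % L) = c ((i2 + 0) % L) := by
      rw [show i2 + (L - (i2 - i1)) = L + i1 by omega, Nat.add_mod_left,
        Nat.mod_eq_of_lt (by omega : i1 < L), show i2 + 0 = i2 by omega,
        Nat.mod_eq_of_lt h2]
      exact hcc
    have hAnn : 0 ≤ wtw v (fun p => a (i1 + p)) (fun p => c (i1 + p)) (i2 - i1) :=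
      walk_nonneg hrm hmax (i2 - i1) (by omega) _ _ hMA hcA
    have hBnn : 0 ≤ wtw v (fun p => a ((i2 + p) % L)) (fun p => c ((i2 + p) % L))
        (L - (i2 - i1)) :=
      walk_nonneg hrm hmax (L - (i2 - i1)) (by omega) _ _ hMB hcB
    by_cases hkA : i1 ≤ k ∧ k < i2
    · -- edge lies on subwalk A at position k - i1
      obtain ⟨M', hrm', hval, hge⟩ := IH (i2 - i1) (by omega) (by omega) _ _ (k - i1)
        (by omega) hMA hcA
      refine ⟨M', hrm', ?_, by linarith⟩
      have e1 : i1 + (k - i1) = k := by omega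
      have e2 : i1 + (k - i1 + 1) = k + 1 := by omega
      simp only [e1, e2] at hval
      exact hval
    · -- edge lies on subwalk B
      push_neg at hkA
      set p : ℕ := if k < i1 then L - i2 + k else k - i2 with hp
      have hkcase : k < i1 ∨ i2 ≤ k := by
        by_cases hki : k < i1
        · left; exact hki
        · right
          exact hkA (by omega)
      have hpm : (i2 + p) % L = k := by
        rcases hkcase with hcase | hcase
        · rw [hp, if_pos hcase, show i2 + (L - i2 + k) = L + k by omega,
            Nat.add_mod_left, Nat.mod_eq_of_lt (by omega)]
        · rw [hp, if_neg (by omega), show i2 + (k - i2) = k by omega,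
            Nat.mod_eq_of_lt (by omega)]
      have hplt : p < L - (i2 - i1) := by
        rcases hkcase with hcase | hcase
        · rw [hp, if_pos hcase]; omega
        · rw [hp, if_neg (by omega)]; omega
      have hpm1 : c ((i2 + (p + 1)) % L) = c (k + 1) := by
        have hone : 1 % L = 1 := Nat.mod_eq_of_lt (by omega)
        rw [show i2 + (p + 1) = (i2 + p) + 1 by omega,
          Nat.add_mod (i2 + p) 1 L, hone, hpm]
        exact c_succ_mod hc (by omega : k < L)
      obtain ⟨M', hrm', hval, hge⟩ := IH (L - (i2 - i1)) (by omega) (by omega) _ _ p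
        hplt hMB hcB
      refine ⟨M', hrm', ?_, by linarith⟩
      simp only [hpm, hpm1] at hval
      exact hval

end Walk

/-- Counting: at time `t < n`, the maximum remaining matching which matches all remaining
items must match the currently arriving agent `σ t`. -/
lemma matched_at {z : Fin n → Option I} {σ : Equiv.Perm (Fin n)} (t : Fin n)
    {M : Fin n → Option I} (hcard : Fintype.card I = n)
    (hrm : RemainMatching z σ (t : ℕ) M) (hall : MatchesAllRemaining z (t : ℕ) M) :
    ∃ b, M (σ t) = some b := by
  rcases hMσ : M (σ t) with _ | b
  swap
  · exact ⟨b, rfl⟩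
  exfalso
  classical
  set Rem : Finset I := Finset.univ \ soldBefore z (t : ℕ) with hRemDef
  have hsold : (soldBefore z (t : ℕ)).card ≤ (t : ℕ) :=
    soldBefore_card_le z _ (le_of_lt t.2)
  have hRemCard : n - (t : ℕ) ≤ Rem.card := by
    rw [hRemDef, Finset.card_sdiff_of_subset (Finset.subset_univ _), Finset.card_univ, hcard]
    omega
  have hch : ∀ b ∈ Rem, ∃ a, M a = some b := by
    intro b hb
    rw [hRemDef, Finset.mem_sdiff] at hb
    exact hall b hb.2
  set g : I → Fin n := fun b => if hb : ∃ a, M a = some b then hb.choose else σ t with hg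
  have hgM : ∀ b ∈ Rem, M (g b) = some b := by
    intro b hb
    simp only [hg]
    rw [dif_pos (hch b hb)]
    exact (hch b hb).choose_spec
  set A : Finset (Fin n) :=
    Finset.image σ (Finset.univ.filter (fun s : Fin n => (t : ℕ) < (s : ℕ))) with hA
  have hmaps : ∀ b ∈ Rem, g b ∈ A := by
    intro b hb
    rw [hA, Finset.mem_image]
    refine ⟨σ.symm (g b), ?_, Equiv.apply_symm_apply σ _⟩
    rw [Finset.mem_filter]
    refine ⟨Finset.mem_univ _, ?_⟩
    by_contra hle
    push_neg at hle
    rcases Nat.lt_or_ge ((σ.symm (g b) : Fin n) : ℕ) (t : ℕ) with hlt | hge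
    · have := hrm.2.1 (σ.symm (g b)) hlt
      rw [Equiv.apply_symm_apply] at this
      rw [hgM b hb] at this
      simp at this
    · have heq : σ.symm (g b) = t := by
        apply Fin.ext; omega
      have h3 := hgM b hb
      rw [show g b = σ t by rw [← heq, Equiv.apply_symm_apply], hMσ] at h3
      simp at h3
  have hinj : Set.InjOn g Rem := by
    intro b hb b' hb' heq
    have h1 := hgM b hb
    rw [heq, hgM b' hb'] at h1
    exact (Option.some.inj h1).symm
  have hcardle : Rem.card ≤ A.card := Finset.card_le_card_of_injOn g hmaps hinj
  have hAcard : A.card = n - ((t : ℕ) + 1) := by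
    rw [hA, Finset.card_image_of_injective _ σ.injective, card_filter_coe_gt _ t.2]
  have ht := t.2
  omega

open Fin.NatCast in
lemma cycle_to_walk {v : Fin n → I → ℝ} {M : Fin n → Option I} {b b' : I}
    (h : OnZeroCycleM v M b b') :
    ∃ (L : ℕ) (a : ℕ → Fin n) (c : ℕ → I), 0 < L ∧
      (∀ i, i < L → M (a i) = some (c i)) ∧ c L = c 0 ∧
      wtw v a c L = 0 ∧ c 0 = b ∧ c 1 = b' := by
  obtain ⟨ℓ, ca, cb, hmatch, hsum, j0, hj1, hj2⟩ := h
  refine ⟨ℓ + 1, fun i => ca (j0 + (i : Fin (ℓ + 1))), fun i => cb (j0 + (i : Fin (ℓ + 1))),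
    Nat.succ_pos ℓ, fun i _ => hmatch _, ?_, ?_, ?_, ?_⟩
  · show cb (j0 + ((ℓ + 1 : ℕ) : Fin (ℓ + 1))) = cb (j0 + ((0 : ℕ) : Fin (ℓ + 1)))
    congr 1
    rw [Fin.natCast_self, Nat.cast_zero]
  · unfold wtw
    have hterm : ∀ i : ℕ,
        (v (ca (j0 + (i : Fin (ℓ + 1)))) (cb (j0 + (i : Fin (ℓ + 1)))) -
          v (ca (j0 + (i : Fin (ℓ + 1)))) (cb (j0 + ((i + 1 : ℕ) : Fin (ℓ + 1))))) =
        (fun j : Fin (ℓ + 1) => v (ca j) (cb j) - v (ca j) (cb (j + 1)))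
          (j0 + (i : Fin (ℓ + 1))) := by
      intro i
      simp only
      congr 2
      push_cast
      abel
    rw [Finset.sum_congr rfl (fun i _ => hterm i)]
    rw [← Fin.sum_univ_eq_sum_range
      (fun i => (fun j : Fin (ℓ + 1) => v (ca j) (cb j) - v (ca j) (cb (j + 1)))
        (j0 + (i : Fin (ℓ + 1))))]
    have hcast : ∀ i : Fin (ℓ + 1),
        (fun j : Fin (ℓ + 1) => v (ca j) (cb j) - v (ca j) (cb (j + 1)))
          (j0 + (((i : ℕ) : Fin (ℓ + 1)))) =
        (fun j : Fin (ℓ + 1) => v (ca j) (cb j) - v (ca j) (cb (j + 1))) (j0 + i) := by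
      intro i
      rw [Fin.cast_val_eq_self]
    rw [Finset.sum_congr rfl (fun i _ => hcast i)]
    rw [← hsum]
    exact Fintype.sum_equiv (Equiv.addLeft j0)
      (fun i => (fun j : Fin (ℓ + 1) => v (ca j) (cb j) - v (ca j) (cb (j + 1))) (j0 + i))
      (fun j => v (ca j) (cb j) - v (ca j) (cb (j + 1))) (fun i => rfl)
  · show cb (j0 + ((0 : ℕ) : Fin (ℓ + 1))) = b
    rw [Nat.cast_zero, add_zero]
    exact hj1
  · show cb (j0 + ((1 : ℕ) : Fin (ℓ + 1))) = b'
    rw [Nat.cast_one]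
    exact hj2

/-- the invariant of the matching-market dynamic pricing scheme.  Agents `Fin n`
arrive in order `σ`; before step `t` the scheme fixes a maximum-weight matching `μ t` of the
remaining agents that matches all remaining items, and prices `pt t` satisfying the three
constraint families: nonnegativity; `p(b) − p(b') < v_a(b) − v_a(b')` for every relation-graph
edge `⟨b, b'⟩` not lying on a zero-weight cycle; and `p(b) < v_a(b)` for every matched pair
`(a, b)` of positive value.  The arriving agent `σ t` buys an arbitrary utility-maximizing
available item `z t` (or nothing if no available item has positive utility).  Then for every
`t ≤ n` there is a maximum-weight matching `ν` of the remaining agents and items with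
`SW(M_t) + SW(ν) = OPT`, and in particular the final welfare `SW(M_n)` equals `OPT`. -/
theorem stmt_19 (v : Fin n → I → ℝ) (hv : ∀ a b, 0 ≤ v a b)
    (hcard : Fintype.card I = n)
    (OPT : ℝ)
    (hOPTopt : ∃ f : Fin n → Option I, PartialM f ∧ msw v f = OPT)
    (hOPTmax : ∀ f : Fin n → Option I, PartialM f → msw v f ≤ OPT)
    (σ : Equiv.Perm (Fin n))
    (z : Fin n → Option I)
    (μ : Fin n → (Fin n → Option I))
    (hμ : ∀ t : Fin n, RemainMatching z σ (t : ℕ) (μ t) ∧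
      MatchesAllRemaining z (t : ℕ) (μ t) ∧
      ∀ ν : Fin n → Option I, RemainMatching z σ (t : ℕ) ν → msw v ν ≤ msw v (μ t))
    (pt : Fin n → I → ℝ)
    (hp1 : ∀ t : Fin n, ∀ b : I, 0 ≤ pt t b)
    (hp2 : ∀ t : Fin n, ∀ a : Fin n, ∀ b b' : I, μ t a = some b →
      b' ∉ soldBefore z (t : ℕ) → b' ≠ b → ¬ OnZeroCycleM v (μ t) b b' →
      pt t b - pt t b' < v a b - v a b')
    (hp3 : ∀ t : Fin n, ∀ a : Fin n, ∀ b : I, μ t a = some b → 0 < v a b →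
      pt t b < v a b)
    (hz : ∀ t : Fin n,
      match z t with
      | some b => b ∉ soldBefore z (t : ℕ) ∧ 0 ≤ v (σ t) b - pt t b ∧
          ∀ b' : I, b' ∉ soldBefore z (t : ℕ) → v (σ t) b' - pt t b' ≤ v (σ t) b - pt t b
      | none => ∀ b' : I, b' ∉ soldBefore z (t : ℕ) → v (σ t) b' - pt t b' ≤ 0) :
    (∀ t : ℕ, t ≤ n → ∃ ν : Fin n → Option I,
      RemainMatching z σ t ν ∧
      (∀ ν' : Fin n → Option I, RemainMatching z σ t ν' → msw v ν' ≤ msw v ν) ∧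
      (∑ s ∈ Finset.univ.filter (fun s : Fin n => (s : ℕ) < t),
          (z s).elim 0 (v (σ s))) + msw v ν = OPT) ∧
    ∑ s : Fin n, (z s).elim 0 (v (σ s)) = OPT := by
  classical
  have main : ∀ t : ℕ, t ≤ n → ∃ ν : Fin n → Option I,
      RemainMatching z σ t ν ∧
      (∀ ν' : Fin n → Option I, RemainMatching z σ t ν' → msw v ν' ≤ msw v ν) ∧
      (∑ s ∈ Finset.univ.filter (fun s : Fin n => (s : ℕ) < t),
          (z s).elim 0 (v (σ s))) + msw v ν = OPT := by
    intro t
    induction t with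
    | zero =>
      intro _
      obtain ⟨f, hf, hfsw⟩ := hOPTopt
      refine ⟨f, ⟨hf, fun s hs => absurd hs (Nat.not_lt_zero _), fun a b hab hb => ?_⟩,
        fun ν' hν' => le_of_le_of_eq (hOPTmax ν' hν'.1) hfsw.symm, ?_⟩
      · rw [mem_soldBefore] at hb
        obtain ⟨s, hs, -⟩ := hb
        omega
      · have hfe : Finset.univ.filter (fun s : Fin n => (s : ℕ) < 0) = ∅ := by
          ext s; simp
        rw [hfe, Finset.sum_empty, zero_add, hfsw]
    | succ t ihp =>
      intro ht1
      have ht : t < n := ht1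
      obtain ⟨ν, hνrm, hνmax, hνsw⟩ := ihp (le_of_lt ht)
      set tf : Fin n := ⟨t, ht⟩ with htf
      have htfc : (tf : ℕ) = t := rfl
      obtain ⟨hMrm, hMall, hMmax⟩ := hμ tf
      set M := μ tf with hMdef
      have hswM : (∑ s ∈ Finset.univ.filter (fun s : Fin n => (s : ℕ) < t),
          (z s).elim 0 (v (σ s))) + msw v M = OPT := by
        have e1 : msw v ν ≤ msw v M := hMmax ν hνrm
        have e2 : msw v M ≤ msw v ν := hνmax M hMrm
        have : msw v M = msw v ν := le_antisymm e2 e1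
        rw [this]
        exact hνsw
      obtain ⟨b, hb⟩ := matched_at tf hcard hMrm hMall
      have hz_t := hz tf
      have hfil : Finset.univ.filter (fun s : Fin n => (s : ℕ) < t + 1) =
          insert tf (Finset.univ.filter (fun s : Fin n => (s : ℕ) < t)) := filter_lt_succ t ht
      have htfnot : tf ∉ Finset.univ.filter (fun s : Fin n => (s : ℕ) < t) := by
        simp [htf]
      have hsum_succ : (∑ s ∈ Finset.univ.filter (fun s : Fin n => (s : ℕ) < t + 1),
          (z s).elim 0 (v (σ s))) =
          (z tf).elim 0 (v (σ tf)) +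
          ∑ s ∈ Finset.univ.filter (fun s : Fin n => (s : ℕ) < t), (z s).elim 0 (v (σ s)) := by
        rw [hfil, Finset.sum_insert htfnot]
      have hsold_succ : ∀ b0 : I, b0 ∈ soldBefore z (t + 1) ↔
          z tf = some b0 ∨ b0 ∈ soldBefore z t := by
        intro b0
        rw [mem_soldBefore, mem_soldBefore]
        constructor
        · rintro ⟨s, hs, hzs⟩
          by_cases hst : (s : ℕ) = t
          · left
            have hstf : s = tf := Fin.ext hst
            rwa [← hstf]
          · right; exact ⟨s, by omega, hzs⟩
        · rintro (hzz | ⟨s, hs, hzs⟩)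
          · exact ⟨tf, by simp [htf], hzz⟩
          · exact ⟨s, by omega, hzs⟩
      have hupd_some : ∀ (f : Fin n → Option I) (x : Fin n) (b0 : I),
          Function.update f (σ tf) none x = some b0 → x ≠ σ tf ∧ f x = some b0 := by
        intro f x b0 hx
        by_cases hxσ : x = σ tf
        · subst hxσ
          rw [Function.update_self] at hx
          exact absurd hx (by simp)
        · rw [Function.update_of_ne hxσ] at hx
          exact ⟨hxσ, hx⟩
      rcases hzt : z tf with _ | b''
      · -- the agent bought nothing
        rw [hzt] at hz_t
        have hbnot : b ∉ soldBefore z t := hMrm.2.2 _ _ hb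
        have hub := hz_t b hbnot
        have hvb : v (σ tf) b = 0 := by
          by_contra hne
          have hpos : 0 < v (σ tf) b := lt_of_le_of_ne (hv _ _) (Ne.symm hne)
          have := hp3 tf (σ tf) b hb hpos
          linarith
        have hmswup : msw v (Function.update M (σ tf) none) = msw v M := by
          rw [msw_update, hb]
          simp [hvb]
        refine ⟨Function.update M (σ tf) none, ⟨?_, ?_, ?_⟩, ?_, ?_⟩
        · intro k k' b0 hk hk'
          obtain ⟨hk1, hk2⟩ := hupd_some M k b0 hk
          obtain ⟨hk'1, hk'2⟩ := hupd_some M k' b0 hk'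
          exact hMrm.1 k k' b0 hk2 hk'2
        · intro s hs
          by_cases hst : (s : ℕ) = t
          · have : s = tf := Fin.ext hst
            rw [this, Function.update_self]
          · have hsne : σ s ≠ σ tf := fun hc => hst (by
              have := σ.injective hc
              exact congrArg Fin.val this)
            rw [Function.update_of_ne hsne]
            exact hMrm.2.1 s (by omega)
        · intro x b0 hx
          obtain ⟨hx1, hx2⟩ := hupd_some M x b0 hx
          rw [hsold_succ]
          push_neg
          refine ⟨by rw [hzt]; simp, hMrm.2.2 _ _ hx2⟩
        · intro ν'' hν''
          have := hMmax ν'' (RemainMatching.mono (Nat.le_succ t) hν'')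
          rw [hmswup]
          exact this
        · rw [hsum_succ, hzt, hmswup]
          simpa using hswM
      · -- the agent bought item b''
        rw [hzt] at hz_t
        obtain ⟨hb''not, hb''u, hb''max⟩ := hz_t
        have hM' : ∃ M', RemainMatching z σ t M' ∧ M' (σ tf) = some b'' ∧
            msw v M' = msw v M := by
          by_cases hbb : b'' = b
          · exact ⟨M, hMrm, by rw [hb, hbb], rfl⟩
          · have hbnot : b ∉ soldBefore z t := hMrm.2.2 _ _ hb
            have hcmp := hb''max b hbnot
            have hcyc : OnZeroCycleM v M b b'' := by
              by_contra hn
              have := hp2 tf (σ tf) b b'' hb hb''not hbb hn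
              linarith
            obtain ⟨L, aw, cw, hL, hMw, hcw, hwt0, hc0, hc1⟩ := cycle_to_walk hcyc
            obtain ⟨M', hrm', hval, hge⟩ := walk_rotate hMrm hMmax L hL aw cw 0 hL hMw hcw
            have ha0 : aw 0 = σ tf := by
              apply hMrm.1 _ _ b
              · rw [hMw 0 hL, hc0]
              · exact hb
            rw [ha0] at hval
            rw [hwt0, sub_zero] at hge
            have hle := hMmax M' hrm'
            refine ⟨M', hrm', ?_, le_antisymm hle hge⟩
            rw [hval]
            norm_num [hc1]
        obtain ⟨M', hrm', hM'σ, hM'sw⟩ := hM'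
        have hmswup : msw v (Function.update M' (σ tf) none) =
            msw v M' - v (σ tf) b'' := by
          rw [msw_update, hM'σ]
          simp
        refine ⟨Function.update M' (σ tf) none, ⟨?_, ?_, ?_⟩, ?_, ?_⟩
        · intro k k' b0 hk hk'
          obtain ⟨hk1, hk2⟩ := hupd_some M' k b0 hk
          obtain ⟨hk'1, hk'2⟩ := hupd_some M' k' b0 hk'
          exact hrm'.1 k k' b0 hk2 hk'2
        · intro s hs
          by_cases hst : (s : ℕ) = t
          · have : s = tf := Fin.ext hst
            rw [this, Function.update_self]
          · have hsne : σ s ≠ σ tf := fun hc => hst (congrArg Fin.val (σ.injective hc))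
            rw [Function.update_of_ne hsne]
            exact hrm'.2.1 s (by omega)
        · intro x b0 hx
          obtain ⟨hx1, hx2⟩ := hupd_some M' x b0 hx
          rw [hsold_succ]
          push_neg
          refine ⟨?_, hrm'.2.2 _ _ hx2⟩
          rw [hzt]
          intro hcontra
          injection hcontra with hcon
          exact hx1 (hrm'.1 x (σ tf) b0 hx2 (by rw [hM'σ, hcon]))
        · intro ν'' hν''
          -- extend ν'' by assigning b'' to σ tf
          have hν''σ : ν'' (σ tf) = none := hν''.2.1 tf (by simp [htf])
          have hb''sold : b'' ∈ soldBefore z (t + 1) := by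
            rw [hsold_succ]
            left
            exact hzt
          have hextrm : RemainMatching z σ t (Function.update ν'' (σ tf) (some b'')) := by
            refine ⟨?_, ?_, ?_⟩
            · intro k k' b0 hk hk'
              by_cases hkσ : k = σ tf <;> by_cases hk'σ : k' = σ tf
              · rw [hkσ, hk'σ]
              · exfalso
                subst hkσ
                rw [Function.update_self] at hk
                rw [Function.update_of_ne hk'σ] at hk'
                have hb0 : b0 = b'' := (Option.some.inj hk).symm
                subst hb0
                exact hν''.2.2 k' b0 hk' hb''sold
              · exfalso
                subst hk'σ
                rw [Function.update_self] at hk'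
                rw [Function.update_of_ne hkσ] at hk
                have hb0 : b0 = b'' := (Option.some.inj hk').symm
                subst hb0
                exact hν''.2.2 k b0 hk hb''sold
              · rw [Function.update_of_ne hkσ] at hk
                rw [Function.update_of_ne hk'σ] at hk'
                exact hν''.1 k k' b0 hk hk'
            · intro s hs
              have hsne : σ s ≠ σ tf := fun hc => by
                have := congrArg Fin.val (σ.injective hc)
                simp [htf] at this
                omega
              rw [Function.update_of_ne hsne]
              exact hν''.2.1 s (by omega)
            · intro x b0 hx
              by_cases hxσ : x = σ tf
              · subst hxσ
                rw [Function.update_self] at hx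
                have hb0 : b'' = b0 := Option.some.inj hx
                subst hb0
                exact hb''not
              · rw [Function.update_of_ne hxσ] at hx
                intro hmem
                exact hν''.2.2 x b0 hx (soldBefore_mono (Nat.le_succ t) hmem)
          have hext := hMmax _ hextrm
          have hextsw : msw v (Function.update ν'' (σ tf) (some b'')) =
              msw v ν'' + v (σ tf) b'' := by
            rw [msw_update, hν''σ]
            simp
          rw [hextsw] at hext
          rw [hmswup]
          linarith [hM'sw]
        · rw [hsum_succ, hzt, hmswup, hM'sw]
          have he : (some b'').elim (0:ℝ) (v (σ tf)) = v (σ tf) b'' := rfl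
          rw [he]
          linarith [hswM]
  refine ⟨main, ?_⟩
  obtain ⟨ν, hνrm, -, hνsw⟩ := main n (le_refl n)
  have hνnone : ∀ x, ν x = none := by
    intro x
    have := hνrm.2.1 (σ.symm x) (σ.symm x).2
    rwa [Equiv.apply_symm_apply] at this
  have hνzero : msw v ν = 0 := by
    unfold msw
    apply Finset.sum_eq_zero
    intro x _
    rw [hνnone x]
    rfl
  have hful : Finset.univ.filter (fun s : Fin n => (s : ℕ) < n) = Finset.univ := by
    ext s
    simp [s.2]
  rw [hful, hνzero, add_zero] at hνsw
  exact hνsw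

end Stmt19
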